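/- Let ω ∈ Ω, m ∈ ℕ and b = (m−1,0), and define the configuration ω^b by: ω^b(0,0) = ω(γ_b^ω); ω^b(0,y) = ω(γ_{b+(0,y)}^ω) − ω(γ_{b+(0,y−1)}^ω) for y ≥ 1; and ω^b(z) = ω(b+z) otherwise. Then ω^b is a configuration (all values are nonnegative), ω^b(γ_z^{ω^b}) = ω(γ_{b+z}^ω) for every z ∈ ℤ₊², and V(T_{(1,1)}^{ω^b}) = V(T_{(m,1)}^ω) − b. -/

import Mathlib

open scoped NNReal

/-- A site of the lattice `ℤ²`. -/
abbrev Site : Type := ℤ × ℤ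

/-- The positive quadrant `ℤ₊²`. -/
def posQuad : Set Site := {z : Site | 0 ≤ z.1 ∧ 0 ≤ z.2}

/-- An admissible (up-right) step. -/
def IsStep (u v : Site) : Prop := v = u + (1, 0) ∨ v = u + (0, 1)

/-- `γ` is an up-right path from `(0,0)` to `z`, i.e. `γ ∈ Γ_z`. -/
def IsPathTo (z : Site) (γ : List Site) : Prop :=
  γ.head? = some ((0, 0) : Site) ∧ γ.getLast? = some z ∧ γ.Chain' IsStep

/-- The length `ω(γ) = Σ_{z ∈ γ} ω(z)` of a path `γ` under the configuration `ω`. -/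
noncomputable def plen (ω : Site → ℝ) (γ : List Site) : ℝ := (γ.map ω).sum

/-- `γ ∈ Γ_z` is `ω`-optimal if its length is maximal over `Γ_z`. -/
def IsOptimal (ω : Site → ℝ) (z : Site) (γ : List Site) : Prop :=
  IsPathTo z γ ∧ ∀ γ' : List Site, IsPathTo z γ' → plen ω γ' ≤ plen ω γ

/-- `γ` is below `γ'`: at every step index, the second coordinate of the site of `γ`
is at most that of the corresponding site of `γ'`. -/
def Below (γ γ' : List Site) : Prop :=
  ∀ (i : ℕ) (h : i < γ.length) (h' : i < γ'.length),
    (γ.get ⟨i, h⟩).2 ≤ (γ'.get ⟨i, h'⟩).2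

/-- `γ` is the low-optimal path of `Γ_z`: it is `ω`-optimal and below every
`ω`-optimal path of `Γ_z`. -/
def IsLowOptimal (ω : Site → ℝ) (z : Site) (γ : List Site) : Prop :=
  IsOptimal ω z γ ∧ ∀ γ' : List Site, IsOptimal ω z γ' → Below γ γ'

open Classical in
/-- The low-optimal path `γ_z^ω` (an arbitrary default when it does not exist). -/
noncomputable def lowOpt (ω : Site → ℝ) (z : Site) : List Site :=
  if h : ∃ γ : List Site, IsLowOptimal ω z γ then h.choose else []

/-- The vertex set `V(T_z^ω) = {z' ∈ ℤ₊² : z ∈ γ_{z'}^ω}` of the subtree rooted at `z`. -/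
def treeV (ω : Site → ℝ) (z : Site) : Set Site :=
  {z' : Site | z' ∈ posQuad ∧ z ∈ lowOpt ω z'}

/- ============ machinery ============ -/

def ysite (f : ℕ → ℕ) (i : ℕ) : Site := ((i : ℤ) - (f i : ℤ), (f i : ℤ))

def StepFun (f : ℕ → ℕ) : Prop := f 0 = 0 ∧ ∀ i, f (i+1) = f i ∨ f (i+1) = f i + 1

def build (f : ℕ → ℕ) (n : ℕ) : List Site := (List.range (n+1)).map (ysite f)

lemma sf_le {f : ℕ → ℕ} (hf : StepFun f) : ∀ i, f i ≤ i := by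
  intro i; induction i with
  | zero => simp [hf.1]
  | succ i ih => rcases hf.2 i with h | h <;> omega

lemma sf_mono {f : ℕ → ℕ} (hf : StepFun f) {i j : ℕ} (h : i ≤ j) : f i ≤ f j := by
  induction j with
  | zero =>
    have hi0 : i = 0 := by omega
    subst hi0; rfl
  | succ j ih =>
    rcases Nat.eq_or_lt_of_le h with rfl | h'
    · rfl
    · rcases hf.2 j with h2 | h2 <;> (have := ih (by omega); omega)

lemma sf_add {f : ℕ → ℕ} (hf : StepFun f) (i : ℕ) : ∀ d, f (i + d) ≤ f i + d := by
  intro d; induction d with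
  | zero => simp
  | succ d ih => rcases hf.2 (i + d) with h | h <;> (rw [← Nat.add_assoc] at *; omega)

lemma sf_between {f : ℕ → ℕ} (hf : StepFun f) {i j : ℕ} (hij : i ≤ j) : f j ≤ f i + (j - i) := by
  have := sf_add hf i (j - i); rwa [Nat.add_sub_cancel' hij] at this

@[simp] lemma build_length (f : ℕ → ℕ) (n : ℕ) : (build f n).length = n + 1 := by
  simp [build]

lemma build_get (f : ℕ → ℕ) (n i : ℕ) (h : i < (build f n).length) :
    (build f n).get ⟨i, h⟩ = ysite f i := by
  simp only [build, List.get_eq_getElem, List.getElem_map]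
  congr 1
  exact List.getElem_range _

lemma mem_build {f : ℕ → ℕ} {n : ℕ} {s : Site} :
    s ∈ build f n ↔ ∃ i, i ≤ n ∧ ysite f i = s := by
  simp only [build, List.mem_map, List.mem_range]
  constructor
  · rintro ⟨i, hi, rfl⟩; exact ⟨i, by omega, rfl⟩
  · rintro ⟨i, hi, rfl⟩; exact ⟨i, by omega, rfl⟩

lemma build_isPathTo {f : ℕ → ℕ} (hf : StepFun f) (n : ℕ) :
    IsPathTo (ysite f n) (build f n) := by
  refine ⟨?_, ?_, ?_⟩
  · rw [build, List.range_succ_eq_map]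
    simp [ysite, hf.1]
  · rw [build, List.range_succ, List.map_append]
    exact List.getLast?_concat
  · rw [show List.Chain' IsStep _ ↔ List.IsChain IsStep _ from Iff.rfl, List.isChain_iff_getElem]
    intro i hi
    simp only [build_length] at hi
    simp only [build, List.getElem_map, List.getElem_range]
    rcases hf.2 i with h | h
    · left; unfold ysite; rw [h]; ext <;> push_cast <;> simp <;> ring
    · right; unfold ysite; rw [h]; ext <;> push_cast <;> simp <;> ring

lemma plen_build (ω : Site → ℝ) (f : ℕ → ℕ) (n : ℕ) :
    plen ω (build f n) = ∑ i ∈ Finset.range (n+1), ω (ysite f i) := by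
  induction n with
  | zero => simp [plen, build, List.range_succ]
  | succ n ih =>
    rw [Finset.sum_range_succ, ← ih, plen, plen, build, build, List.range_succ (n := n+1),
      List.map_append, List.map_append, List.sum_append]
    simp

lemma pathTo_ne_nil {z : Site} {γ : List Site} (h : IsPathTo z γ) : γ ≠ [] := by
  intro hnil; rw [hnil] at h; simp [IsPathTo] at h

lemma pathTo_zero {z : Site} {γ : List Site} (h : IsPathTo z γ) (h0 : 0 < γ.length) :
    γ[0] = ((0,0) : Site) := by
  have hne := pathTo_ne_nil h
  have h1 : γ[0] = γ.head hne := by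
    rw [← List.get_mk_zero h0]; rfl
  rw [h1]
  have := h.1
  rw [List.head?_eq_head hne] at this
  exact Option.some_injective _ this

lemma pathTo_last {z : Site} {γ : List Site} (h : IsPathTo z γ)
    (hl : γ.length - 1 < γ.length) : γ[γ.length - 1] = z := by
  have hne := pathTo_ne_nil h
  have := h.2.1
  rw [List.getLast?_eq_getLast hne] at this
  rw [List.getLast_eq_getElem] at this
  exact Option.some_injective _ this

lemma pathTo_step {z : Site} {γ : List Site} (h : IsPathTo z γ) {i : ℕ}
    (hi : i + 1 < γ.length) :
    γ[i+1] = γ[i]'(by omega) + (1,0) ∨ γ[i+1] = γ[i]'(by omega) + (0,1) := by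
  have := List.isChain_iff_getElem.mp h.2.2 i (by omega)
  rcases this with h' | h' <;> [left; right] <;> exact h'

lemma pathTo_coords {z : Site} {γ : List Site} (h : IsPathTo z γ) :
    ∀ i (hi : i < γ.length), (γ[i]'hi).1 + (γ[i]'hi).2 = i ∧ 0 ≤ (γ[i]'hi).2 := by
  intro i
  induction i with
  | zero => intro hi; rw [pathTo_zero h hi]; simp
  | succ i ih =>
    intro hi
    have hi' : i < γ.length := by omega
    obtain ⟨hs, hy⟩ := ih hi'
    rcases pathTo_step h hi with hstep | hstep <;> rw [hstep] <;>
      constructor <;> simp only [Prod.fst_add, Prod.snd_add, Prod.mk.injEq] <;>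
        norm_num <;> omega

lemma path_repr {z : Site} {γ : List Site} (h : IsPathTo z γ) :
    ∃ (f : ℕ → ℕ) (n : ℕ), StepFun f ∧ γ = build f n ∧ ysite f n = z ∧ (n : ℤ) = z.1 + z.2 := by
  have hne := pathTo_ne_nil h
  have hlen : 0 < γ.length := List.length_pos_iff.mpr hne
  set n := γ.length - 1 with hn
  have hmin : ∀ i : ℕ, min i n < γ.length := by intro i; omega
  set f : ℕ → ℕ := fun i => ((γ[min i n]'(hmin i)).2).toNat with hf
  have hgetf : ∀ i (hi : i < γ.length), ((f i : ℤ)) = (γ[i]'hi).2 := by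
    intro i hi
    have hmi : min i n = i := by omega
    have h2 : f i = (γ[i]'hi).2.toNat := by simp only [hf, hmi]
    rw [h2, Int.toNat_of_nonneg (pathTo_coords h i hi).2]
  have hsf : StepFun f := by
    constructor
    · have h00 := pathTo_zero h hlen
      have := hgetf 0 hlen
      rw [h00] at this
      simp only [hf] at this ⊢
      omega
    · intro i
      by_cases hc : i + 1 ≤ n
      · have hii : i + 1 < γ.length := by omega
        have e1 := hgetf i (by omega)
        have e2 := hgetf (i+1) hii
        rcases pathTo_step h hii with hstep | hstep <;>
          rw [hstep] at e2 <;> simp only [Prod.snd_add] at e2 <;> [left; right] <;> omega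
      · left
        have h2 : min (i+1) n = n := by omega
        have h1 : min i n = n := by omega
        simp only [hf, h1, h2]
  refine ⟨f, n, hsf, ?_, ?_, ?_⟩
  · apply List.ext_get
    · simp [hn]; omega
    · intro i h1 h2
      rw [build_get]
      have hi : i < γ.length := h1
      have hco := pathTo_coords h i hi
      have hyy := hgetf i hi
      unfold ysite
      have : γ.get ⟨i, h1⟩ = γ[i]'hi := rfl
      rw [this]
      ext
      · simp only []; omega
      · simp only []; omega
  · have hl : n < γ.length := by omega
    have hz := pathTo_last h (by omega)
    have hco := pathTo_coords h n hl
    have hyy := hgetf n hl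
    rw [hz] at hco hyy
    unfold ysite
    ext <;> simp only [] <;> omega
  · have hl : n < γ.length := by omega
    have hz := pathTo_last h (by omega)
    have hco := pathTo_coords h n hl
    rw [hz] at hco
    omega

lemma pathTo_posQuad {z : Site} {γ : List Site} (h : IsPathTo z γ) : z ∈ posQuad := by
  obtain ⟨f, n, hf, _, hz, _⟩ := path_repr h
  rw [← hz]
  have := sf_le hf n
  exact ⟨by simp [ysite]; omega, by simp [ysite]⟩

/-- The x-coordinates along a path are at most the final x-coordinate. -/
lemma pathTo_mem_x_le {z : Site} {γ : List Site} (h : IsPathTo z γ) {s : Site}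
    (hs : s ∈ γ) : s.1 ≤ z.1 := by
  obtain ⟨f, n, hf, rfl, hz, _⟩ := path_repr h
  rw [mem_build] at hs
  obtain ⟨i, hi, rfl⟩ := hs
  rw [← hz]
  simp only [ysite]
  have h1 := sf_between hf hi
  have h2 := sf_le hf i
  omega

/-- The staircase path: exists a path to any z in the quadrant. -/
lemma exists_pathTo {z : Site} (hz : z ∈ posQuad) : ∃ γ, IsPathTo z γ := by
  obtain ⟨hx, hy⟩ := hz
  set x := z.1.toNat
  set y := z.2.toNat
  set f : ℕ → ℕ := fun i => i - min i x with hf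
  have hsf : StepFun f := by
    constructor
    · simp [hf]
    · intro i
      simp only [hf]
      by_cases hc : i < x
      · left; omega
      · right; omega
  refine ⟨build f (x + y), ?_⟩
  have := build_isPathTo hsf (x + y)
  convert this using 2
  have : f (x + y) = y := by simp only [hf]; omega
  simp only [ysite, this]
  have hx' : (x:ℤ) = z.1 := Int.toNat_of_nonneg hx
  have hy' : (y:ℤ) = z.2 := Int.toNat_of_nonneg hy
  ext <;> simp <;> omega

/-- Paths to z are determined by their y-coordinates / two builds to same z with fns agreeing. -/
lemma build_congr {f g : ℕ → ℕ} {n : ℕ} (h : ∀ i, i ≤ n → f i = g i) :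
    build f n = build g n := by
  unfold build
  apply List.map_congr_left
  intro i hi
  rw [List.mem_range] at hi
  unfold ysite
  rw [h i (by omega)]

lemma pathsTo_finite (z : Site) : {γ : List Site | IsPathTo z γ}.Finite := by
  rw [← Set.finite_coe_iff]
  set n := (z.1 + z.2).toNat with hn
  apply Finite.of_injective (β := Fin (n+1) → Fin (n+1))
    (f := fun γ => fun i =>
      ⟨min ((γ.1.getD i (0,0)).2.toNat) n, by omega⟩)
  intro γ γ' hee
  obtain ⟨f, k, hf, hb, hz, hk⟩ := path_repr γ.2
  obtain ⟨f', k', hf', hb', hz', hk'⟩ := path_repr γ'.2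
  have hkn : k = n := by omega
  have hkn' : k' = n := by omega
  subst hkn; subst hkn'
  have hfun := congrFun hee
  apply Subtype.ext
  rw [hb, hb']
  apply build_congr
  intro i hi
  have h1 := hfun ⟨i, by omega⟩
  simp only [Fin.mk.injEq] at h1
  have hg : ∀ (F : ℕ → ℕ), StepFun F → (build F n).getD i (0,0) = ysite F i := by
    intro F hF
    rw [List.getD_eq_getElem _ _ (by simp; omega), ← build_get F n i (by simp; omega)]
    rfl
  rw [hb, hg f hf] at h1
  rw [hb', hg f' hf'] at h1
  simp only [ysite, Int.toNat_natCast] at h1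
  have l1 := sf_le hf i
  have l2 := sf_le hf' i
  have b1 := sf_between hf hi
  have b2 := sf_between hf' hi
  -- f n = f' n = z.2.toNat bound: f i ≤ n
  omega

lemma exists_isOptimal (ω : Site → ℝ) {z : Site} (hz : z ∈ posQuad) :
    ∃ γ, IsOptimal ω z γ := by
  obtain ⟨γ₀, hγ₀⟩ := exists_pathTo hz
  obtain ⟨γ, hγ, hmax⟩ := Set.exists_max_image {γ | IsPathTo z γ} (plen ω)
    (pathsTo_finite z) ⟨γ₀, hγ₀⟩
  exact ⟨γ, hγ, fun γ' h' => hmax γ' h'⟩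

/-- the min of two step functions is a step function -/
lemma sf_min {f g : ℕ → ℕ} (hf : StepFun f) (hg : StepFun g) :
    StepFun (fun i => min (f i) (g i)) := by
  refine ⟨by simp [hf.1, hg.1], fun i => ?_⟩
  rcases hf.2 i with h1 | h1 <;> rcases hg.2 i with h2 | h2 <;> simp only [] <;> omega

lemma sf_max {f g : ℕ → ℕ} (hf : StepFun f) (hg : StepFun g) :
    StepFun (fun i => max (f i) (g i)) := by
  refine ⟨by simp [hf.1, hg.1], fun i => ?_⟩
  rcases hf.2 i with h1 | h1 <;> rcases hg.2 i with h2 | h2 <;> simp only [] <;> omega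

lemma get_snd_of_build {γ : List Site} {f : ℕ → ℕ} {n : ℕ} (hb : γ = build f n)
    (i : ℕ) (hi : i < γ.length) : (γ.get ⟨i, hi⟩).2 = (f i : ℤ) := by
  subst hb
  rw [build_get]
  rfl

lemma plen_min_max (ω : Site → ℝ) (f g : ℕ → ℕ) (n : ℕ) :
    plen ω (build (fun i => min (f i) (g i)) n) + plen ω (build (fun i => max (f i) (g i)) n)
      = plen ω (build f n) + plen ω (build g n) := by
  rw [plen_build, plen_build, plen_build, plen_build, ← Finset.sum_add_distrib,
    ← Finset.sum_add_distrib]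
  apply Finset.sum_congr rfl
  intro i _
  simp only [ysite]
  rcases le_total (f i) (g i) with hle | hle
  · rw [show min (f i) (g i) = f i from by omega, show max (f i) (g i) = g i from by omega]
  · rw [show min (f i) (g i) = g i from by omega, show max (f i) (g i) = f i from by omega]
    ring

/-- y-sum of a path -/
noncomputable def ysum (γ : List Site) : ℤ := (γ.map Prod.snd).sum

lemma ysum_build (f : ℕ → ℕ) (n : ℕ) :
    ysum (build f n) = ∑ i ∈ Finset.range (n+1), (f i : ℤ) := by
  induction n with
  | zero => simp [ysum, build, List.range_succ, ysite]
  | succ n ih =>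
    rw [Finset.sum_range_succ, ← ih, ysum, ysum, build, build, List.range_succ (n := n+1),
      List.map_append, List.map_append, List.sum_append]
    simp [ysite]

lemma exists_isLowOptimal (ω : Site → ℝ) {z : Site} (hz : z ∈ posQuad) :
    ∃ γ, IsLowOptimal ω z γ := by
  obtain ⟨γ₁, hγ₁⟩ := exists_isOptimal ω hz
  obtain ⟨γ, hγ, hmin⟩ := Set.exists_min_image {γ | IsOptimal ω z γ} ysum
    ((pathsTo_finite z).subset (fun γ' h' => h'.1)) ⟨γ₁, hγ₁⟩
  refine ⟨γ, hγ, ?_⟩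
  intro γ' hγ'
  obtain ⟨f, n, hf, hb, hez, hn⟩ := path_repr hγ.1
  obtain ⟨g, n', hg, hb', hez', hn'⟩ := path_repr hγ'.1
  have hnn : n' = n := by omega
  rw [hnn] at hb' hez'
  clear hnn
  set fm : ℕ → ℕ := fun i => min (f i) (g i) with hfm
  have hsm : StepFun fm := sf_min hf hg
  have hsM : StepFun (fun i => max (f i) (g i)) := sf_max hf hg
  have hfgn : f n = g n := by
    have h1 : (f n : ℤ) = z.2 := congrArg Prod.snd hez
    have h2 : (g n : ℤ) = z.2 := congrArg Prod.snd hez'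
    omega
  have hpm : IsPathTo z (build fm n) := by
    have hh := build_isPathTo hsm n
    have he : ysite fm n = z := by
      simp only [ysite, hfm, hfgn, min_self]
      rw [← hez']
      simp only [ysite]
    rwa [he] at hh
  have hpM : IsPathTo z (build (fun i => max (f i) (g i)) n) := by
    have hh := build_isPathTo hsM n
    have he : ysite (fun i => max (f i) (g i)) n = z := by
      simp only [ysite, hfgn, max_self]
      rw [← hez']
      simp only [ysite]
    rwa [he] at hh
  have hoptval : plen ω (build fm n) = plen ω γ := by
    have hsum := plen_min_max ω f g n
    rw [← hb, ← hb'] at hsum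
    have h1 : plen ω (build fm n) ≤ plen ω γ := hγ.2 _ hpm
    have h2 : plen ω (build (fun i => max (f i) (g i)) n) ≤ plen ω γ := hγ.2 _ hpM
    have h4 : plen ω γ' ≤ plen ω γ := hγ.2 _ hγ'.1
    have h3 : plen ω γ ≤ plen ω γ' := hγ'.2 _ hγ.1
    simp only [hfm] at hsum ⊢
    linarith
  have hmopt : IsOptimal ω z (build fm n) := by
    refine ⟨hpm, fun γ'' h'' => ?_⟩
    rw [hoptval]; exact hγ.2 _ h''
  have hys : ysum γ ≤ ysum (build fm n) := hmin _ hmopt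
  rw [hb, ysum_build, ysum_build] at hys
  have hpt : ∀ i ∈ Finset.range (n+1), (fm i : ℤ) ≤ (f i : ℤ) := by
    intro i _; simp only [hfm]; push_cast; omega
  have hkey := (Finset.sum_eq_sum_iff_of_le hpt).mp (le_antisymm (Finset.sum_le_sum hpt) hys)
  intro i hiγ hiγ'
  rw [get_snd_of_build hb i hiγ, get_snd_of_build hb' i hiγ']
  have hin : i ∈ Finset.range (n+1) := by
    rw [hb, build_length] at hiγ; exact Finset.mem_range.mpr hiγ
  have := hkey i hin
  simp only [hfm] at this
  omega

lemma lowOpt_spec {ω : Site → ℝ} {z : Site} (hz : z ∈ posQuad) :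
    IsLowOptimal ω z (lowOpt ω z) := by
  rw [lowOpt, dif_pos (exists_isLowOptimal ω hz)]
  exact (exists_isLowOptimal ω hz).choose_spec

lemma lowOpt_unique {ω : Site → ℝ} {z : Site} {γ : List Site}
    (h : IsLowOptimal ω z γ) : lowOpt ω z = γ := by
  have hz := pathTo_posQuad h.1.1
  have h' := lowOpt_spec (ω := ω) hz
  have hb1 : Below (lowOpt ω z) γ := h'.2 _ h.1
  have hb2 : Below γ (lowOpt ω z) := h.2 _ h'.1
  obtain ⟨f, n, hf, hb, hez, hn⟩ := path_repr h'.1.1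
  obtain ⟨g, n', hg, hbg, hez', hn'⟩ := path_repr h.1.1
  have hnn : n' = n := by omega
  rw [hnn] at hbg hez'
  rw [hb, hbg]
  apply build_congr
  intro i hi
  have l1 : i < (lowOpt ω z).length := by rw [hb, build_length]; omega
  have l2 : i < γ.length := by rw [hbg, build_length]; omega
  have e1 := hb1 i l1 l2
  have e2 := hb2 i l2 l1
  rw [get_snd_of_build hb i l1, get_snd_of_build hbg i l2] at e1 e2
  omega

lemma lowOpt_nil {ω : Site → ℝ} {z : Site} (hz : z ∉ posQuad) : lowOpt ω z = [] := by
  rw [lowOpt, dif_neg]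
  rintro ⟨γ, hγ⟩
  exact hz (pathTo_posQuad hγ.1.1)

/-! generic value lemmas -/

lemma plen_nonneg {ω : Site → ℝ} (hω : ∀ s, 0 ≤ ω s) (γ : List Site) : 0 ≤ plen ω γ := by
  apply List.sum_nonneg
  intro x hx
  rw [List.mem_map] at hx
  obtain ⟨s, _, rfl⟩ := hx
  exact hω s

lemma plen_le_lowOpt {ω : Site → ℝ} {z : Site} (hz : z ∈ posQuad) {γ : List Site}
    (h : IsPathTo z γ) : plen ω γ ≤ plen ω (lowOpt ω z) :=
  (lowOpt_spec hz).1.2 γ h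

lemma lowOpt_pathTo {ω : Site → ℝ} {z : Site} (hz : z ∈ posQuad) :
    IsPathTo z (lowOpt ω z) := (lowOpt_spec hz).1.1

lemma lowOpt_mono_up {ω : Site → ℝ} (hω : ∀ s, 0 ≤ ω s) {z : Site} (hz : z ∈ posQuad) :
    plen ω (lowOpt ω z) ≤ plen ω (lowOpt ω (z + (0,1))) := by
  have hp := lowOpt_pathTo (ω := ω) hz
  set γ := lowOpt ω z
  have hne := pathTo_ne_nil hp
  have hpath : IsPathTo (z + (0,1)) (γ ++ [z + (0,1)]) := by
    refine ⟨?_, ?_, ?_⟩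
    · rw [List.head?_append_of_ne_nil _ hne]  -- name may differ
      exact hp.1
    · exact List.getLast?_concat
    · rw [show List.Chain' IsStep _ ↔ List.IsChain IsStep _ from Iff.rfl, List.isChain_append]
      refine ⟨hp.2.2, List.isChain_singleton _, ?_⟩
      intro x hx y hy
      rw [hp.2.1] at hx
      simp at hx hy
      subst hx; subst hy
      right; rfl
  have hq : z + (0,1) ∈ posQuad := ⟨by simpa using hz.1, by
    have := hz.2; simp [Prod.snd_add]; omega⟩
  have := plen_le_lowOpt (ω := ω) hq hpath
  refine le_trans ?_ this
  rw [plen, plen, List.map_append, List.sum_append]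
  simp only [List.map_cons, List.map_nil, List.sum_cons, List.sum_nil]
  have := hω (z + (0,1))
  linarith

/-! exit-index machinery -/

lemma exit_data {f : ℕ → ℕ} {n : ℕ} (hf : StepFun f) (hfn : f n < n) :
    ∃ k, (∀ i ≤ k, f i = i) ∧ f (k+1) = k ∧ k < n ∧ (∀ i, k < i → f i + 1 ≤ i) := by
  have hex : ∃ i, f (i+1) = f i := by
    by_contra hc
    push_neg at hc
    have : ∀ i, f i = i := by
      intro i
      induction i with
      | zero => exact hf.1
      | succ i ih => rcases hf.2 i with h | h
                     · exact absurd h (hc i)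
                     · omega
    have := this n
    omega
  set k := Nat.find hex with hk
  have hmin : ∀ i, i < k → f (i+1) = f i + 1 := by
    intro i hi
    rcases hf.2 i with h | h
    · exact absurd h (Nat.find_min hex hi)
    · exact h
  have hinit : ∀ i, i ≤ k → f i = i := by
    intro i hi
    induction i with
    | zero => exact hf.1
    | succ i ih =>
      rw [hmin i (by omega), ih (by omega)]
  have hfk : f (k+1) = k := by
    have := Nat.find_spec hex
    rw [← hk] at this
    rw [this, hinit k (le_refl k)]
  have hlate : ∀ i, k < i → f i + 1 ≤ i := by
    intro i hi
    have := sf_between hf (show k+1 ≤ i by omega)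
    omega
  have hkn : k < n := by
    by_cases h : k < n
    · exact h
    · exfalso
      have := hinit n (by omega)
      omega
  exact ⟨k, hinit, hfk, hkn, hlate⟩

lemma cross_data {g : ℕ → ℕ} {mm N : ℕ} (hg : StepFun g) (hm : 1 ≤ mm)
    (hcol : mm + g N ≤ N) :
    ∃ k, g (mm - 1 + k) = k ∧ g (mm + k) = k ∧ mm + k ≤ N ∧
      (∀ j, j < mm + k → j < mm + g j) ∧ (∀ j, mm + k ≤ j → mm + g j ≤ j) := by
  have hgle := sf_le hg
  set c : ℕ → ℕ := fun j => j - g j with hc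
  have hcs : StepFun c := by
    refine ⟨by simp [hc, hg.1], ?_⟩
    intro i
    have h1 := hgle i
    rcases hg.2 i with h | h <;> simp only [hc] <;> omega
  have hcex : ∃ j, mm ≤ c j := ⟨N, by simp only [hc]; omega⟩
  set J := Nat.find hcex with hJ
  have hcJ : mm ≤ c J := Nat.find_spec hcex
  have hJpos : 1 ≤ J := by
    rcases Nat.eq_zero_or_pos J with h | h
    · exfalso; rw [h] at hcJ; simp [hc, hg.1] at hcJ; omega
    · exact h
  have hclt : ∀ j, j < J → c j < mm := by
    intro j hj
    have := Nat.find_min hcex hj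
    omega
  have hcJm : c J = mm := by
    have h1 := hclt (J-1) (by omega)
    have h2 : c J ≤ c (J-1) + 1 := by
      rcases hcs.2 (J-1) with h | h <;>
        (rw [show J - 1 + 1 = J by omega] at h; omega)
    omega
  have hgJ : g J = J - mm := by
    have := hgle J
    simp only [hc] at hcJm
    omega
  set k := g J with hk
  have hJk : J = mm + k := by
    simp only [hk, hgJ]
    have : mm ≤ J := by
      have := hgle J
      simp only [hc] at hcJm
      omega
    omega
  have hcJ1 : c (J - 1) = mm - 1 := by
    have h1 := hclt (J-1) (by omega)
    have h2 : c J ≤ c (J-1) + 1 := by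
      rcases hcs.2 (J-1) with h | h <;>
        (rw [show J - 1 + 1 = J by omega] at h; omega)
    omega
  have hgJ1 : g (J - 1) = k := by
    have := hgle (J-1)
    simp only [hc] at hcJ1
    simp only [hk, hgJ]
    omega
  have hJN : J ≤ N := Nat.find_min' hcex (by simp only [hc]; omega)
  refine ⟨k, ?_, ?_, by omega, ?_, ?_⟩
  · rw [show mm - 1 + k = J - 1 by omega]; exact hgJ1
  · rw [← hJk]
  · intro j hj
    have h1 := hclt j (by omega)
    have h2 := hgle j
    simp only [hc] at h1
    omega
  · intro j hj
    have hmono := sf_mono hcs (show J ≤ j by omega)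
    simp only [hc] at hmono hcJm
    have := hgle j
    omega

lemma plen_build_split (ω : Site → ℝ) (f : ℕ → ℕ) {a n : ℕ} (h : a ≤ n) :
    plen ω (build f n) = plen ω (build f a)
      + ∑ i ∈ Finset.Ico (a+1) (n+1), ω (ysite f i) := by
  rw [plen_build, plen_build, Finset.range_eq_Ico, Finset.range_eq_Ico]
  exact (Finset.sum_Ico_consecutive (fun i => ω (ysite f i))
    (show 0 ≤ a+1 by omega) (show a+1 ≤ n+1 by omega)).symm

lemma sum_Ico_shift (h : ℕ → ℝ) (M a b : ℕ) :
    ∑ j ∈ Finset.Ico (M+a) (M+b), h j = ∑ i ∈ Finset.Ico a b, h (M+i) := by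
  rw [Finset.sum_Ico_eq_sum_range, Finset.sum_Ico_eq_sum_range]
  rw [show M + b - (M + a) = b - a by omega]
  apply Finset.sum_congr rfl
  intro t _
  congr 1
  omega

lemma teles {ω ωb : Site → ℝ} {m : ℕ} (hm : 1 ≤ m)
    (h0 : ωb (0, 0) = plen ω (lowOpt ω ((m : ℤ) - 1, 0)))
    (hy : ∀ y : ℤ, 1 ≤ y →
      ωb (0, y) = plen ω (lowOpt ω (((m : ℤ) - 1, 0) + (0, y)))
        - plen ω (lowOpt ω (((m : ℤ) - 1, 0) + (0, y - 1)))) :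
    ∀ k : ℕ, ∑ i ∈ Finset.range (k+1), ωb (0, (i:ℤ))
      = plen ω (lowOpt ω ((m:ℤ)-1, (k:ℤ))) := by
  intro k
  induction k with
  | zero => simpa using h0
  | succ k ih =>
    rw [Finset.sum_range_succ, ih]
    have hyk := hy ((k:ℤ)+1) (by omega)
    have e1 : (((m:ℤ) - 1, 0) : Site) + (0, (k:ℤ)+1) = ((m:ℤ)-1, ((k+1:ℕ):ℤ)) := by
      simp only [Prod.mk_add_mk, Prod.mk.injEq]; constructor <;> push_cast <;> ring
    have e2 : (((m:ℤ) - 1, 0) : Site) + (0, (k:ℤ)+1-1) = ((m:ℤ)-1, (k:ℤ)) := by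
      simp only [Prod.mk_add_mk, Prod.mk.injEq]; constructor <;> push_cast <;> ring
    rw [e1, e2] at hyk
    have e3 : ((0:ℤ), ((k+1:ℕ):ℤ)) = ((0:ℤ), (k:ℤ)+1) := by push_cast; rfl
    rw [e3, hyk]
    ring

lemma axis_lowOpt (ωA : Site → ℝ) {z : Site} (hz : z ∈ posQuad) (hx : z.1 = 0) :
    ∃ n : ℕ, (n:ℤ) = z.2 ∧ lowOpt ωA z = build (fun i => i) n := by
  have hid : StepFun (fun i : ℕ => i) := ⟨rfl, fun i => Or.inr rfl⟩
  set n := z.2.toNat with hn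
  have hnz : (n:ℤ) = z.2 := Int.toNat_of_nonneg hz.2
  have hey : ysite (fun i => i) n = z := by
    simp only [ysite]
    rw [Prod.ext_iff]
    constructor <;> simp <;> omega
  have hpath : IsPathTo z (build (fun i => i) n) := by
    have := build_isPathTo hid n
    rwa [hey] at this
  have hall : ∀ γ', IsPathTo z γ' → γ' = build (fun i => i) n := by
    intro γ' h'
    obtain ⟨f, n', hf, hb, hez, hn'⟩ := path_repr h'
    have hnn : n' = n := by omega
    rw [hnn] at hb hez
    rw [hb]
    apply build_congr
    intro i hi
    have h1 := sf_le hf i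
    have h2 := sf_between hf hi
    have h3 : (f n : ℤ) = z.2 := congrArg Prod.snd hez
    omega
  refine ⟨n, hnz, lowOpt_unique ⟨⟨hpath, ?_⟩, ?_⟩⟩
  · intro γ' h'
    rw [hall γ' h']
  · intro γ' h'
    have := hall γ' h'.1
    subst this
    intro i h h'
    exact le_refl _

lemma mem_posQuad_mk {a b : ℤ} (ha : 0 ≤ a) (hb : 0 ≤ b) : ((a,b) : Site) ∈ posQuad :=
  ⟨ha, hb⟩

lemma phi_full {ω ωb : Site → ℝ} {m : ℕ} (hm : 1 ≤ m)
    (h0 : ωb (0, 0) = plen ω (lowOpt ω ((m : ℤ) - 1, 0)))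
    (hy : ∀ y : ℤ, 1 ≤ y →
      ωb (0, y) = plen ω (lowOpt ω (((m : ℤ) - 1, 0) + (0, y)))
        - plen ω (lowOpt ω (((m : ℤ) - 1, 0) + (0, y - 1))))
    (hoth : ∀ z : Site, z ≠ (0, 0) → ¬(z.1 = 0 ∧ 1 ≤ z.2) →
      ωb z = ω (((m : ℤ) - 1, 0) + z))
    {z : Site} (hx : 1 ≤ z.1)
    {f : ℕ → ℕ} {n : ℕ} (hf : StepFun f) (hez : ysite f n = z) :
    ∃ (G' : ℕ → ℕ) (k : ℕ),
      StepFun G' ∧ ysite G' ((m-1) + n) = ((m:ℤ)-1, 0) + z ∧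
      plen ω (build G' ((m-1) + n)) = plen ωb (build f n) ∧
      (∀ j, (m-1) + k < j → G' j = f (j - (m-1))) ∧
      (∀ i, i ≤ k → f i = i) ∧ f (k+1) = k ∧ k < n := by
  have hez1 : (n:ℤ) - f n = z.1 := congrArg Prod.fst hez
  have hez2 : (f n : ℤ) = z.2 := congrArg Prod.snd hez
  have hfn : f n < n := by omega
  obtain ⟨k, hinit, hk1, hkn, hlate⟩ := exit_data hf hfn
  set M := m - 1 with hM
  have hq : (((m:ℤ)-1, (k:ℤ)) : Site) ∈ posQuad := mem_posQuad_mk (by omega) (by omega)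
  have hαp := lowOpt_pathTo (ω := ω) hq
  obtain ⟨a, Nα, ha, hba, heza, hNα⟩ := path_repr hαp
  have heza1 : (Nα:ℤ) - a Nα = (m:ℤ)-1 := congrArg Prod.fst heza
  have heza2 : (a Nα : ℤ) = (k:ℤ) := congrArg Prod.snd heza
  have hNαn : Nα = M + k := by omega
  rw [hNαn] at hba heza2
  set G' : ℕ → ℕ := fun j => if j ≤ M + k then a j else f (j - M) with hG'
  have hG'a : ∀ j, j ≤ M + k → G' j = a j := by
    intro j hj; simp only [hG', if_pos hj]
  have hG'f : ∀ j, M + k < j → G' j = f (j - M) := by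
    intro j hj; simp only [hG', if_neg (by omega : ¬ j ≤ M + k)]
  have hsG' : StepFun G' := by
    constructor
    · rw [hG'a 0 (by omega)]; exact ha.1
    · intro j
      by_cases hc1 : j + 1 ≤ M + k
      · rw [hG'a j (by omega), hG'a (j+1) hc1]; exact ha.2 j
      · by_cases hc2 : j ≤ M + k
        · have hjeq : j = M + k := by omega
          rw [hG'a j hc2, hG'f (j+1) (by omega)]
          left
          rw [show j + 1 - M = k + 1 by omega, hjeq, hk1]
          omega
        · rw [hG'f j (by omega), hG'f (j+1) (by omega),
            show j + 1 - M = (j - M) + 1 by omega]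
          exact hf.2 (j - M)
  have hG'Mn : G' (M + n) = f n := by
    rw [hG'f (M+n) (by omega), show M + n - M = n by omega]
  have hend : ysite G' (M + n) = (((m:ℤ)-1, 0) : Site) + z := by
    rw [← hez]
    simp only [ysite, hG'Mn, Prod.mk_add_mk, Prod.mk.injEq]
    constructor <;> push_cast <;> omega
  have htail : ∀ i ∈ Finset.Ico (k+1) (n+1),
      ω (ysite G' (M + i)) = ωb (ysite f i) := by
    intro i hi
    rw [Finset.mem_Ico] at hi
    have hgi : G' (M + i) = f i := by
      rw [hG'f (M+i) (by omega), show M + i - M = i by omega]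
    have hxi : f i + 1 ≤ i := hlate i (by omega)
    have e1 : ysite G' (M+i) = (((m:ℤ)-1, 0) : Site) + ysite f i := by
      simp only [ysite, hgi, Prod.mk_add_mk, Prod.mk.injEq]
      constructor <;> push_cast <;> omega
    have hne : ysite f i ≠ ((0,0) : Site) := by
      intro hcon
      have := congrArg Prod.fst hcon
      simp only [ysite] at this
      omega
    have hax : ¬((ysite f i).1 = 0 ∧ 1 ≤ (ysite f i).2) := by
      rintro ⟨hcon, -⟩
      simp only [ysite] at hcon
      omega
    rw [e1, hoth _ hne hax]
  have hsplit1 := plen_build_split ω G' (show M + k ≤ M + n by omega)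
  have hsplit2 := plen_build_split ωb f (show k ≤ n by omega)
  have hinitsum : plen ω (build G' (M + k)) = plen ωb (build f k) := by
    have e1 : build G' (M + k) = build a (M + k) := build_congr (fun j hj => hG'a j hj)
    have e2 : plen ωb (build f k) = ∑ i ∈ Finset.range (k+1), ωb (0, (i:ℤ)) := by
      rw [plen_build]
      apply Finset.sum_congr rfl
      intro i hi
      rw [Finset.mem_range] at hi
      congr 1
      simp only [ysite, hinit i (by omega), Prod.mk.injEq]
      constructor <;> push_cast <;> omega
    rw [e1, e2, teles hm h0 hy k, hba]
  have hshift : ∑ j ∈ Finset.Ico (M+k+1) (M+n+1), ω (ysite G' j)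
      = ∑ i ∈ Finset.Ico (k+1) (n+1), ωb (ysite f i) := by
    rw [show M+k+1 = M+(k+1) by omega, show M+n+1 = M+(n+1) by omega,
      sum_Ico_shift (fun j => ω (ysite G' j)) M (k+1) (n+1)]
    exact Finset.sum_congr rfl htail
  refine ⟨G', k, hsG', hend, ?_, hG'f, hinit, hk1, hkn⟩
  rw [hsplit1, hsplit2, hinitsum, hshift]

lemma psi_full {ω ωb : Site → ℝ} {m : ℕ} (hm : 1 ≤ m)
    (h0 : ωb (0, 0) = plen ω (lowOpt ω ((m : ℤ) - 1, 0)))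
    (hy : ∀ y : ℤ, 1 ≤ y →
      ωb (0, y) = plen ω (lowOpt ω (((m : ℤ) - 1, 0) + (0, y)))
        - plen ω (lowOpt ω (((m : ℤ) - 1, 0) + (0, y - 1))))
    (hoth : ∀ z : Site, z ≠ (0, 0) → ¬(z.1 = 0 ∧ 1 ≤ z.2) →
      ωb z = ω (((m : ℤ) - 1, 0) + z))
    {z : Site} (hz : z ∈ posQuad) (hx : 1 ≤ z.1) :
    ∃ (g F : ℕ → ℕ) (N n k : ℕ),
      lowOpt ω (((m:ℤ)-1, 0) + z) = build g N ∧
      lowOpt ωb z = build F n ∧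
      plen ωb (build F n) = plen ω (lowOpt ω (((m:ℤ)-1, 0) + z)) ∧
      (∀ i, i ≤ k → F i = i) ∧
      (∀ i, k < i → F i = g ((m-1) + i)) ∧
      N = (m-1) + n ∧ m + k ≤ N ∧
      (∀ j, j < m + k → j < m + g j) ∧ (∀ j, m + k ≤ j → m + g j ≤ j) := by
  have hbz : ((((m:ℤ)-1, 0) : Site) + z) ∈ posQuad := by
    refine ⟨?_, ?_⟩
    · have := hz.1
      show (0:ℤ) ≤ ((m:ℤ)-1) + z.1
      omega
    · have := hz.2
      show (0:ℤ) ≤ 0 + z.2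
      omega
  have hδp := lowOpt_pathTo (ω := ω) hbz
  obtain ⟨g, N, hg, hbδ, hezδ, hNz⟩ := path_repr hδp
  have h1 := congrArg Prod.fst hezδ
  have h2 := congrArg Prod.snd hezδ
  simp only [ysite, Prod.fst_add, Prod.snd_add] at h1 h2
  simp only [Prod.fst_add, Prod.snd_add] at hNz
  have hz1 := hz.1
  have hz2 := hz.2
  set M := m - 1 with hM
  have hNge : (m:ℤ) - 1 ≤ (N:ℤ) := by
    simp at h1 h2 hNz
    omega
  have h1' : (N:ℤ) - g N = (m:ℤ) - 1 + z.1 := by simpa using h1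
  have h2' : (g N : ℤ) = z.2 := by simpa using h2
  set n := N - M with hn
  have hNn : N = M + n := by omega
  have hnz : (n:ℤ) = z.1 + z.2 := by omega
  have hcol : m + g N ≤ N := by omega
  obtain ⟨k, hgM1, hgM2, hkN, hbef, haft⟩ := cross_data hg hm hcol
  have hkn : k + 1 ≤ n := by omega
  set F : ℕ → ℕ := fun i => if i ≤ k then i else g (M + i) with hF
  have hFi : ∀ i, i ≤ k → F i = i := by
    intro i hi; simp only [hF, if_pos hi]
  have hFg : ∀ i, k < i → F i = g (M + i) := by
    intro i hi; simp only [hF, if_neg (by omega : ¬ i ≤ k)]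
  have hsF : StepFun F := by
    constructor
    · exact hFi 0 (by omega)
    · intro i
      by_cases hc1 : i + 1 ≤ k
      · right; rw [hFi i (by omega), hFi (i+1) hc1]
      · by_cases hc2 : i ≤ k
        · have hieq : i = k := by omega
          left
          rw [hFi i hc2, hFg (i+1) (by omega), hieq,
            show M + (k+1) = m + k by omega, hgM2]
        · rw [hFg i (by omega), hFg (i+1) (by omega),
            show M + (i+1) = (M+i) + 1 by omega]
          exact hg.2 (M+i)
  have hFn : F n = g N := by rw [hFg n (by omega), hNn]
  have hezF : ysite F n = z := by
    simp only [ysite, hFn]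
    rw [Prod.ext_iff]
    constructor
    · simp only []; omega
    · simp only []; omega
  have hFpath : IsPathTo z (build F n) := by
    have := build_isPathTo hsF n
    rwa [hezF] at this
  -- the value of build F n
  have hq : (((m:ℤ)-1, (k:ℤ)) : Site) ∈ posQuad := mem_posQuad_mk (by omega) (by omega)
  have hsplitF := plen_build_split ωb F (show k ≤ n by omega)
  have hinitF : plen ωb (build F k) = plen ω (lowOpt ω ((m:ℤ)-1, (k:ℤ))) := by
    rw [plen_build, ← teles hm h0 hy k]
    apply Finset.sum_congr rfl
    intro i hi
    rw [Finset.mem_range] at hi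
    congr 1
    simp only [ysite, hFi i (by omega), Prod.mk.injEq]
    constructor <;> push_cast <;> omega
  have htail : ∀ i ∈ Finset.Ico (k+1) (n+1),
      ωb (ysite F i) = ω (ysite g (M + i)) := by
    intro i hi
    rw [Finset.mem_Ico] at hi
    have hgi : F i = g (M + i) := hFg i (by omega)
    have hlow : m + g (M+i) ≤ M + i := haft (M+i) (by omega)
    have e1 : (((m:ℤ)-1, 0) : Site) + ysite F i = ysite g (M+i) := by
      simp only [ysite, hgi, Prod.mk_add_mk, Prod.mk.injEq]
      constructor <;> push_cast <;> omega
    have hne : ysite F i ≠ ((0,0) : Site) := by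
      intro hcon
      have := congrArg Prod.fst hcon
      simp only [ysite, hgi] at this
      omega
    have hax : ¬((ysite F i).1 = 0 ∧ 1 ≤ (ysite F i).2) := by
      rintro ⟨hcon, -⟩
      simp only [ysite, hgi] at hcon
      omega
    rw [hoth _ hne hax, e1]
  have hshift : ∑ i ∈ Finset.Ico (k+1) (n+1), ωb (ysite F i)
      = ∑ j ∈ Finset.Ico (M+k+1) (M+n+1), ω (ysite g j) := by
    rw [show M+k+1 = M+(k+1) by omega, show M+n+1 = M+(n+1) by omega,
      sum_Ico_shift (fun j => ω (ysite g j)) M (k+1) (n+1)]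
    exact Finset.sum_congr rfl htail
  have hsplitδ := plen_build_split ω g (show M + k ≤ N by omega)
  have hinitle : plen ω (build g (M+k)) ≤ plen ω (lowOpt ω ((m:ℤ)-1, (k:ℤ))) := by
    apply plen_le_lowOpt hq
    have := build_isPathTo hg (M+k)
    have he : ysite g (M+k) = (((m:ℤ)-1, (k:ℤ)) : Site) := by
      simp only [ysite, hM, hgM1]
      rw [Prod.ext_iff]
      constructor <;> simp only [] <;> omega
    rwa [he] at this
  -- upper bound: every ωb-path to z has plen ≤ plen ω δ
  have hub : ∀ γ'', IsPathTo z γ'' →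
      plen ωb γ'' ≤ plen ω (lowOpt ω (((m:ℤ)-1, 0) + z)) := by
    intro γ'' h''
    obtain ⟨f2, n2, hf2, hb2, hez2, hn2⟩ := path_repr h''
    obtain ⟨G'', k'', hsG'', hend'', hval'', _, _, _, _⟩ :=
      phi_full hm h0 hy hoth hx hf2 hez2
    have hp'' : IsPathTo (((m:ℤ)-1, 0) + z) (build G'' ((m-1) + n2)) := by
      have := build_isPathTo hsG'' ((m-1) + n2)
      rwa [hend''] at this
    rw [hb2, ← hval'']
    exact plen_le_lowOpt hbz hp''
  have hge : plen ω (lowOpt ω (((m:ℤ)-1, 0) + z)) ≤ plen ωb (build F n) := by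
    rw [hbδ, hsplitδ, hsplitF, hinitF, hshift, hNn]
    have : ∑ j ∈ Finset.Ico (M+k+1) (M+n+1), ω (ysite g j)
        = ∑ j ∈ Finset.Ico (M+k+1) (M+n+1), ω (ysite g j) := rfl
    linarith [hinitle]
  have hval : plen ωb (build F n) = plen ω (lowOpt ω (((m:ℤ)-1, 0) + z)) :=
    le_antisymm (hub _ hFpath) hge
  -- low-optimality of build F n
  have hδlow := lowOpt_spec (ω := ω) hbz
  have hlowF : IsLowOptimal ωb z (build F n) := by
    refine ⟨⟨hFpath, fun γ'' h'' => (hub γ'' h'').trans hval.ge⟩, ?_⟩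
    intro γ' hγ'
    obtain ⟨h, n2, hh, hbh, hezh, hn2⟩ := path_repr hγ'.1
    have hn2n : n2 = n := by omega
    rw [hn2n] at hbh hezh
    obtain ⟨G'', k', hsG'', hend'', hval'', hG''f, hinit', hk1', hk'n⟩ :=
      phi_full hm h0 hy hoth hx hh hezh
    have hp'' : IsPathTo (((m:ℤ)-1, 0) + z) (build G'' (M + n)) := by
      have := build_isPathTo hsG'' (M + n)
      rwa [hend''] at this
    have hγ'val : plen ωb γ' = plen ω (lowOpt ω (((m:ℤ)-1, 0) + z)) := by
      have hle1 := hub γ' hγ'.1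
      have hle2 := hγ'.2 _ hFpath
      linarith [hval]
    have hoptG'' : IsOptimal ω (((m:ℤ)-1, 0) + z) (build G'' (M + n)) := by
      refine ⟨hp'', fun γ3 h3 => ?_⟩
      have := plen_le_lowOpt (ω := ω) hbz h3
      rw [hval'', ← hbh, hγ'val]
      exact this
    have hBel := hδlow.2 _ hoptG''
    have hgG : ∀ j, j ≤ N → (g j : ℤ) ≤ (G'' j : ℤ) := by
      intro j hj
      have l1 : j < (lowOpt ω (((m:ℤ)-1, 0) + z)).length := by
        rw [hbδ, build_length]; omega
      have l2 : j < (build G'' (M + n)).length := by rw [build_length]; omega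
      have hb := hBel j l1 l2
      rw [get_snd_of_build hbδ j l1, get_snd_of_build rfl j l2] at hb
      exact hb
    have hkk' : k ≤ k' := by
      by_contra hkk
      push_neg at hkk
      have hj'N : m + k' ≤ N := by omega
      have hbj := hbef (m + k') (by omega)
      have hGj : G'' (m + k') = k' := by
        rw [hG''f (m + k') (by omega), show m + k' - (m-1) = k' + 1 by omega, hk1']
      have := hgG (m + k') hj'N
      rw [hGj] at this
      omega
    intro i l1 l2
    rw [build_length] at l1
    rw [get_snd_of_build rfl i (by rw [build_length]; omega),
      get_snd_of_build hbh i l2]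
    by_cases hik : i ≤ k
    · rw [hFi i hik, hinit' i (by omega)]
    · push_neg at hik
      rw [hFg i hik]
      by_cases hik' : i ≤ k'
      · rw [hinit' i hik']
        have := haft (M + i) (by omega)
        push_cast
        omega
      · push_neg at hik'
        have e1 : G'' (M + i) = h i := by
          rw [hG''f (M + i) (by omega), show M + i - (m-1) = i by omega]
        have := hgG (M + i) (by omega)
        rw [e1] at this
        exact this
  refine ⟨g, F, N, n, k, hbδ, lowOpt_unique hlowF, hval, hFi, hFg, hNn, hkN, hbef, haft⟩

lemma claim2 {ω ωb : Site → ℝ} {m : ℕ} (hm : 1 ≤ m)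
    (h0 : ωb (0, 0) = plen ω (lowOpt ω ((m : ℤ) - 1, 0)))
    (hy : ∀ y : ℤ, 1 ≤ y →
      ωb (0, y) = plen ω (lowOpt ω (((m : ℤ) - 1, 0) + (0, y)))
        - plen ω (lowOpt ω (((m : ℤ) - 1, 0) + (0, y - 1))))
    (hoth : ∀ z : Site, z ≠ (0, 0) → ¬(z.1 = 0 ∧ 1 ≤ z.2) →
      ωb z = ω (((m : ℤ) - 1, 0) + z)) :
    ∀ z ∈ posQuad, plen ωb (lowOpt ωb z) = plen ω (lowOpt ω (((m : ℤ) - 1, 0) + z)) := by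
  intro z hz
  by_cases hx : 1 ≤ z.1
  · obtain ⟨g, F, N, n, k, hbδ, hlow, hval, _⟩ := psi_full hm h0 hy hoth hz hx
    rw [hlow, hval]
  · have hx0 : z.1 = 0 := by have := hz.1; omega
    obtain ⟨n, hnz, hax⟩ := axis_lowOpt ωb hz hx0
    rw [hax, plen_build]
    have he : ∀ i ∈ Finset.range (n+1),
        ωb (ysite (fun i => i) i) = ωb (0, (i:ℤ)) := by
      intro i _
      have hs : ysite (fun i => i) i = ((0:ℤ), (i:ℤ)) := by
        rw [Prod.ext_iff]
        refine ⟨?_, rfl⟩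
        show (i:ℤ) - (i:ℕ) = 0
        omega
      rw [hs]
    rw [Finset.sum_congr rfl he, teles hm h0 hy n]
    have hsite : (((m:ℤ)-1, (n:ℤ)) : Site) = ((m:ℤ)-1, 0) + z := by
      rw [Prod.ext_iff]
      constructor
      · show (m:ℤ)-1 = ((m:ℤ)-1) + z.1
        omega
      · show (n:ℤ) = 0 + z.2
        omega
    rw [hsite]

lemma mem_equiv {ω ωb : Site → ℝ} {m : ℕ} (hm : 1 ≤ m)
    (h0 : ωb (0, 0) = plen ω (lowOpt ω ((m : ℤ) - 1, 0)))
    (hy : ∀ y : ℤ, 1 ≤ y →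
      ωb (0, y) = plen ω (lowOpt ω (((m : ℤ) - 1, 0) + (0, y)))
        - plen ω (lowOpt ω (((m : ℤ) - 1, 0) + (0, y - 1))))
    (hoth : ∀ z : Site, z ≠ (0, 0) → ¬(z.1 = 0 ∧ 1 ≤ z.2) →
      ωb z = ω (((m : ℤ) - 1, 0) + z))
    {z : Site} (hz : z ∈ posQuad) :
    ((((1:ℤ),(1:ℤ)) : Site) ∈ lowOpt ωb z ↔
      (((m:ℤ),(1:ℤ)) : Site) ∈ lowOpt ω (((m:ℤ)-1, 0) + z)) := by
  by_cases hx : 1 ≤ z.1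
  · obtain ⟨g, F, N, n, k, hbδ, hlow, hval, hFi, hFg, hNn, hkN, hbef, haft⟩ :=
      psi_full hm h0 hy hoth hz hx
    rw [hlow, hbδ, mem_build, mem_build]
    constructor
    · rintro ⟨i, hi, hsite⟩
      by_cases hik : i ≤ k
      · exfalso
        have := congrArg Prod.fst hsite
        simp only [ysite, hFi i hik] at this
        omega
      · push_neg at hik
        have hgi : F i = g ((m-1) + i) := hFg i hik
        have f1 := congrArg Prod.fst hsite
        have f2 := congrArg Prod.snd hsite
        simp only [ysite, hgi] at f1 f2
        refine ⟨(m-1) + i, by omega, ?_⟩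
        simp only [ysite, Prod.mk.injEq]
        constructor <;> push_cast <;> omega
    · rintro ⟨j, hj, hsite⟩
      have f1 := congrArg Prod.fst hsite
      have f2 := congrArg Prod.snd hsite
      simp only [ysite] at f1 f2
      have hjm : j = m + 1 := by omega
      have hjk : m + k ≤ j := by
        by_contra hcon
        push_neg at hcon
        have := hbef j hcon
        omega
      refine ⟨2, by omega, ?_⟩
      have hg2 : F 2 = g ((m-1) + 2) := hFg 2 (by omega)
      simp only [ysite, hg2, Prod.mk.injEq]
      rw [show (m-1) + 2 = j by omega]
      constructor <;> push_cast <;> omega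
  · have hx0 : z.1 = 0 := by have := hz.1; omega
    have hbz : ((((m:ℤ)-1, 0) : Site) + z) ∈ posQuad := by
      refine ⟨?_, ?_⟩
      · have := hz.1
        show (0:ℤ) ≤ ((m:ℤ)-1) + z.1
        omega
      · have := hz.2
        show (0:ℤ) ≤ 0 + z.2
        omega
    constructor
    · intro hc
      exfalso
      obtain ⟨n, hnz, hax⟩ := axis_lowOpt ωb hz hx0
      rw [hax, mem_build] at hc
      obtain ⟨i, hi, hsite⟩ := hc
      have := congrArg Prod.fst hsite
      simp only [ysite] at this
      omega
    · intro hc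
      exfalso
      have hle := pathTo_mem_x_le (lowOpt_pathTo (ω := ω) hbz) hc
      have : ((((m:ℤ)-1, 0) : Site) + z).1 = (m:ℤ)-1 + z.1 := rfl
      rw [this] at hle
      simp only [] at hle
      omega


/-- Step II of the proof of Theorem 3: with `b = (m-1,0)`, the configuration `ω^b`
is nonnegative, satisfies `ω^b(γ_z^{ω^b}) = ω(γ_{b+z}^ω)` for all `z ∈ ℤ₊²`, and
`V(T_{(1,1)}^{ω^b}) = V(T_{(m,1)}^ω) − b`. -/
theorem translated_configuration_axis (ω : Site → ℝ) (hω : ∀ z : Site, 0 ≤ ω z)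
    (m : ℕ) (hm : 1 ≤ m) (ωb : Site → ℝ)
    (h0 : ωb (0, 0) = plen ω (lowOpt ω ((m : ℤ) - 1, 0)))
    (hy : ∀ y : ℤ, 1 ≤ y →
      ωb (0, y) = plen ω (lowOpt ω (((m : ℤ) - 1, 0) + (0, y)))
        - plen ω (lowOpt ω (((m : ℤ) - 1, 0) + (0, y - 1))))
    (hoth : ∀ z : Site, z ≠ (0, 0) → ¬(z.1 = 0 ∧ 1 ≤ z.2) →
      ωb z = ω (((m : ℤ) - 1, 0) + z)) :
    (∀ z : Site, 0 ≤ ωb z) ∧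
    (∀ z ∈ posQuad, plen ωb (lowOpt ωb z) = plen ω (lowOpt ω (((m : ℤ) - 1, 0) + z))) ∧
    treeV ωb (1, 1) = (· - (((m : ℤ) - 1, 0) : Site)) '' treeV ω ((m : ℤ), 1) := by

  refine ⟨?_, claim2 hm h0 hy hoth, ?_⟩
  · intro za
    by_cases h00 : za = (0,0)
    · rw [h00, h0]; exact plen_nonneg hω _
    · by_cases haxis : za.1 = 0 ∧ 1 ≤ za.2
      · obtain ⟨ha1, ha2⟩ := haxis
        have hza : za = ((0:ℤ), za.2) := by rw [Prod.ext_iff]; exact ⟨ha1, rfl⟩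
        rw [hza, hy za.2 ha2, sub_nonneg]
        have hq : ((((m:ℤ)-1, 0) : Site) + (0, za.2 - 1)) ∈ posQuad := by
          refine ⟨?_, ?_⟩
          · show (0:ℤ) ≤ ((m:ℤ)-1) + 0; omega
          · show (0:ℤ) ≤ 0 + (za.2 - 1); omega
        have hmono := lowOpt_mono_up hω hq
        have e1 : (((((m:ℤ)-1, 0) : Site) + (0, za.2 - 1)) + (0,1) : Site)
            = (((m:ℤ)-1, 0) : Site) + (0, za.2) := by
          rw [Prod.ext_iff]
          constructor
          · show ((m:ℤ)-1) + 0 + 0 = ((m:ℤ)-1) + 0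
            ring
          · show (0:ℤ) + (za.2 - 1) + 1 = 0 + za.2; ring
        rw [e1] at hmono
        exact hmono
      · rw [hoth za h00 haxis]; exact hω _
  · ext w
    simp only [treeV, Set.mem_setOf_eq, Set.mem_image]
    constructor
    · rintro ⟨hw, hmem⟩
      refine ⟨((m:ℤ)-1, 0) + w, ⟨?_, (mem_equiv hm h0 hy hoth hw).mp hmem⟩, ?_⟩
      · refine ⟨?_, ?_⟩
        · have := hw.1; show (0:ℤ) ≤ ((m:ℤ)-1) + w.1; omega
        · have := hw.2; show (0:ℤ) ≤ 0 + w.2; omega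
      · exact add_sub_cancel_left _ _
    · rintro ⟨x, ⟨hx1, hx2⟩, rfl⟩
      have hple : (m:ℤ) ≤ x.1 := pathTo_mem_x_le (lowOpt_pathTo (ω := ω) hx1) hx2
      have hw : ((x - (((m:ℤ)-1, 0) : Site)) : Site) ∈ posQuad := by
        refine ⟨?_, ?_⟩
        · show (0:ℤ) ≤ x.1 - ((m:ℤ)-1); omega
        · have := hx1.2; show (0:ℤ) ≤ x.2 - 0; omega
      refine ⟨hw, ?_⟩
      have e : (((m:ℤ)-1, 0) : Site) + (x - (((m:ℤ)-1, 0) : Site)) = x := by abel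
      exact (mem_equiv hm h0 hy hoth hw).mpr (by rw [e]; exact hx2)
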